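/- For p, q > 1 and the (p+q)×(p+q) block matrix Σ with unit diagonal, off-diagonal entries ρ_X within the first p×p block, ρ_Y within the last q×q block, and ρ_{XY} in all cross entries, Σ is positive semidefinite if and only if ρ_X ∈ [−1/(p−1), 1], ρ_Y ∈ [−1/(q−1), 1], and ρ_{XY}² ≤ ((1+(p−1)ρ_X)/p) · ((1+(q−1)ρ_Y)/q). -/

import Mathlib

open Matrix

/-- The `(p+q) × (p+q)` block matrix with unit diagonal, correlation `ρX`
within the first block, `ρY` within the second block, and `ρXY` across. -/
def blockEquicorr (p q : ℕ) (ρX ρY ρXY : ℝ) :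
    Matrix (Fin p ⊕ Fin q) (Fin p ⊕ Fin q) ℝ :=
  fun a b =>
    match a, b with
    | Sum.inl i, Sum.inl j => if i = j then 1 else ρX
    | Sum.inl _, Sum.inr _ => ρXY
    | Sum.inr _, Sum.inl _ => ρXY
    | Sum.inr i, Sum.inr j => if i = j then 1 else ρY

lemma equi_sum_aux (n : ℕ) (ρ : ℝ) (x : Fin n → ℝ) :
    ∑ i, x i * ∑ j, (if i = j then (1:ℝ) else ρ) * x j
      = (1-ρ) * ∑ i, x i^2 + ρ * (∑ i, x i)^2 := by
  have key : ∀ i : Fin n, ∑ j, (if i = j then (1:ℝ) else ρ) * x j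
      = ρ * ∑ j, x j + (1-ρ) * x i := by
    intro i
    have h : ∀ j : Fin n, (if i = j then (1:ℝ) else ρ) * x j
        = ρ * x j + (if j = i then (1-ρ) * x j else 0) := by
      intro j; by_cases hij : i = j <;> simp [hij, eq_comm] <;> ring
    rw [Finset.sum_congr rfl fun j _ => h j, Finset.sum_add_distrib,
      Finset.sum_ite_eq', ← Finset.mul_sum]
    simp
  rw [Finset.sum_congr rfl fun i _ => by rw [key i]]
  rw [Finset.sum_congr rfl fun i _ => mul_add (x i) _ _, Finset.sum_add_distrib]
  have e1 : ∑ i, x i * (ρ * ∑ j, x j) = ρ * (∑ i, x i)^2 := by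
    rw [← Finset.sum_mul]; ring
  have e2 : ∑ i, x i * ((1-ρ) * x i) = (1-ρ) * ∑ i, x i^2 := by
    rw [Finset.mul_sum]; exact Finset.sum_congr rfl fun i _ => by ring
  rw [e1, e2]; ring

lemma blockEquicorr_quadform (p q : ℕ) (ρX ρY ρXY : ℝ) (v : Fin p ⊕ Fin q → ℝ) :
    dotProduct (star v) (blockEquicorr p q ρX ρY ρXY *ᵥ v) =
      (1-ρX) * ∑ i, (v (Sum.inl i))^2 + (1-ρY) * ∑ j, (v (Sum.inr j))^2
      + ρX * (∑ i, v (Sum.inl i))^2 + ρY * (∑ j, v (Sum.inr j))^2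
      + 2*ρXY * (∑ i, v (Sum.inl i)) * (∑ j, v (Sum.inr j)) := by
  simp only [star_trivial, dotProduct, mulVec, Fintype.sum_sum_type, blockEquicorr]
  simp only [mul_add, Finset.sum_add_distrib, ← Finset.mul_sum, ← Finset.sum_mul]
  rw [equi_sum_aux p ρX (fun i => v (Sum.inl i)), equi_sum_aux q ρY (fun j => v (Sum.inr j))]
  ring_nf

lemma quad_forms_nonneg_imp (A B C : ℝ) (hA : 0 ≤ A)
    (h : ∀ s t : ℝ, 0 ≤ A*s^2 + 2*B*s*t + C*t^2) : B^2 ≤ A*C := by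
  rcases eq_or_lt_of_le hA with hA0 | hA0
  · have hB : B = 0 := by
      by_contra hB
      have := h (-(C+1)/(2*B)) 1
      rw [← hA0] at this
      have h2 : (2:ℝ)*B ≠ 0 := by positivity
      have : 2*B*(-(C+1)/(2*B)) = -(C+1) := by field_simp
      nlinarith [h (-(C+1)/(2*B)) 1, this]
    have hC : 0 ≤ C := by have := h 0 1; nlinarith
    rw [hB, ← hA0]; nlinarith
  · have := h (-B) A
    nlinarith

lemma quad_nonneg (A B C : ℝ) (hA : 0 ≤ A) (hC : 0 ≤ C) (hB : B^2 ≤ A*C)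
    (s t : ℝ) : 0 ≤ A*s^2 + 2*B*s*t + C*t^2 := by
  rcases eq_or_lt_of_le hA with hA0 | hA0
  · have hB0 : B = 0 := by nlinarith
    rw [hB0, ← hA0]; nlinarith [mul_nonneg hC (sq_nonneg t)]
  · nlinarith [sq_nonneg (A*s + B*t), mul_nonneg (le_of_lt hA0) (sq_nonneg t)]

set_option maxHeartbeats 1000000 in
/-- Characterization of positive semidefiniteness for the block-equicorrelated
matrix: for `p, q > 1`, `Σ ⪰ 0` iff `ρX ∈ [−1/(p−1), 1]`, `ρY ∈ [−1/(q−1), 1]`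
and `ρXY² ≤ ((1+(p−1)ρX)/p)·((1+(q−1)ρY)/q)`. -/
theorem blockEquicorr_posSemidef_iff (p q : ℕ) (hp : 1 < p) (hq : 1 < q)
    (ρX ρY ρXY : ℝ) :
    (blockEquicorr p q ρX ρY ρXY).PosSemidef ↔
      ρX ∈ Set.Icc (-(1 / ((p : ℝ) - 1))) 1 ∧
      ρY ∈ Set.Icc (-(1 / ((q : ℝ) - 1))) 1 ∧
      ρXY ^ 2 ≤ ((1 + ((p : ℝ) - 1) * ρX) / p) * ((1 + ((q : ℝ) - 1) * ρY) / q) := by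
  have hp1 : (1:ℝ) < (p:ℝ) := by exact_mod_cast hp
  have hq1 : (1:ℝ) < (q:ℝ) := by exact_mod_cast hq
  have hp0 : (0:ℝ) < (p:ℝ) := by linarith
  have hq0 : (0:ℝ) < (q:ℝ) := by linarith
  rw [Matrix.posSemidef_iff_dotProduct_mulVec]
  constructor
  · rintro ⟨-, hquad⟩
    -- constant test vectors
    have hconst : ∀ α β : ℝ, 0 ≤ ((p:ℝ)*(1+((p:ℝ)-1)*ρX))*α^2
        + 2*((p:ℝ)*(q:ℝ)*ρXY)*α*β + ((q:ℝ)*(1+((q:ℝ)-1)*ρY))*β^2 := by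
      intro α β
      have h := hquad (Sum.elim (fun _ => α) (fun _ => β))
      rw [blockEquicorr_quadform] at h
      simp only [Sum.elim_inl, Sum.elim_inr, Finset.sum_const, Finset.card_univ,
        Fintype.card_fin, nsmul_eq_mul] at h
      nlinarith [h]
    have hA : 0 ≤ (p:ℝ)*(1+((p:ℝ)-1)*ρX) := by have := hconst 1 0; nlinarith
    have hC : 0 ≤ (q:ℝ)*(1+((q:ℝ)-1)*ρY) := by have := hconst 0 1; nlinarith
    have hA' : 0 ≤ 1+((p:ℝ)-1)*ρX := by nlinarith
    have hC' : 0 ≤ 1+((q:ℝ)-1)*ρY := by nlinarith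
    -- ρX ≤ 1 via difference vector
    have hX1 : ρX ≤ 1 := by
      set i0 : Fin p := ⟨0, by omega⟩
      set i1 : Fin p := ⟨1, by omega⟩
      have hne : i0 ≠ i1 := by simp [i0, i1, Fin.ext_iff]
      set x : Fin p → ℝ := fun i => (if i = i0 then (1:ℝ) else 0) - (if i = i1 then 1 else 0)
        with hxdef
      have h := hquad (Sum.elim x (fun _ => 0))
      rw [blockEquicorr_quadform] at h
      have hs : ∑ i, x i = 0 := by
        simp [hxdef, Finset.sum_sub_distrib]
      have hs2 : ∑ i, (x i)^2 = 2 := by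
        have : ∀ i, (x i)^2 = (if i = i0 then (1:ℝ) else 0) + (if i = i1 then 1 else 0) := by
          intro i
          by_cases h0 : i = i0
          · have : i ≠ i1 := h0 ▸ hne
            simp [hxdef, h0, this, hne]
          · by_cases h1 : i = i1 <;> simp [hxdef, h0, h1, hne, Ne.symm hne]
        rw [Finset.sum_congr rfl fun i _ => this i]
        simp [Finset.sum_add_distrib]; norm_num
      simp only [Sum.elim_inl, Sum.elim_inr, hs, hs2] at h
      simp at h
      nlinarith [h]
    have hY1 : ρY ≤ 1 := by
      set j0 : Fin q := ⟨0, by omega⟩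
      set j1 : Fin q := ⟨1, by omega⟩
      have hne : j0 ≠ j1 := by simp [j0, j1, Fin.ext_iff]
      set y : Fin q → ℝ := fun j => (if j = j0 then (1:ℝ) else 0) - (if j = j1 then 1 else 0)
        with hydef
      have h := hquad (Sum.elim (fun _ => 0) y)
      rw [blockEquicorr_quadform] at h
      have hs : ∑ j, y j = 0 := by
        simp [hydef, Finset.sum_sub_distrib]
      have hs2 : ∑ j, (y j)^2 = 2 := by
        have : ∀ j, (y j)^2 = (if j = j0 then (1:ℝ) else 0) + (if j = j1 then 1 else 0) := by
          intro j
          by_cases h0 : j = j0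
          · have : j ≠ j1 := h0 ▸ hne
            simp [hydef, h0, this, hne]
          · by_cases h1 : j = j1 <;> simp [hydef, h0, h1, hne, Ne.symm hne]
        rw [Finset.sum_congr rfl fun j _ => this j]
        simp [Finset.sum_add_distrib]; norm_num
      simp only [Sum.elim_inl, Sum.elim_inr, hs, hs2] at h
      simp at h
      nlinarith [h]
    -- lower bounds
    have hXlo : -(1 / ((p:ℝ) - 1)) ≤ ρX := by
      have hpm : (0:ℝ) < (p:ℝ) - 1 := by linarith
      rw [neg_le, le_div_iff₀ hpm]
      nlinarith [hA']
    have hYlo : -(1 / ((q:ℝ) - 1)) ≤ ρY := by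
      have hqm : (0:ℝ) < (q:ℝ) - 1 := by linarith
      rw [neg_le, le_div_iff₀ hqm]
      nlinarith [hC']
    have hdisc := quad_forms_nonneg_imp _ _ _ hA hconst
    refine ⟨⟨hXlo, hX1⟩, ⟨hYlo, hY1⟩, ?_⟩
    have hpq : (0:ℝ) < (p:ℝ)*(q:ℝ) := by positivity
    rw [div_mul_div_comm, le_div_iff₀ hpq]
    rw [← mul_le_mul_iff_right₀ hpq]
    nlinarith [hdisc]
  · rintro ⟨⟨hXlo, hX1⟩, ⟨hYlo, hY1⟩, hcross⟩
    have hpm : (0:ℝ) < (p:ℝ) - 1 := by linarith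
    have hqm : (0:ℝ) < (q:ℝ) - 1 := by linarith
    have hA' : 0 ≤ (1+((p:ℝ)-1)*ρX)/(p:ℝ) := by
      have h1 : -ρX ≤ 1 / ((p:ℝ)-1) := neg_le.mp hXlo
      rw [le_div_iff₀ hpm] at h1
      have : 0 ≤ 1+((p:ℝ)-1)*ρX := by nlinarith [h1]
      positivity
    have hC' : 0 ≤ (1+((q:ℝ)-1)*ρY)/(q:ℝ) := by
      have h1 : -ρY ≤ 1 / ((q:ℝ)-1) := neg_le.mp hYlo
      rw [le_div_iff₀ hqm] at h1
      have : 0 ≤ 1+((q:ℝ)-1)*ρY := by nlinarith [h1]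
      positivity
    constructor
    · -- Hermitian
      ext a b
      rcases a with i | i <;> rcases b with j | j <;>
        simp only [conjTranspose_apply, blockEquicorr, star_trivial]
      · exact if_congr eq_comm rfl rfl
      · exact if_congr eq_comm rfl rfl
    · intro v
      have hA0 : 0 ≤ 1+((p:ℝ)-1)*ρX := by
        have h1 : -ρX ≤ 1 / ((p:ℝ)-1) := neg_le.mp hXlo
        rw [le_div_iff₀ hpm] at h1
        nlinarith [h1]
      have hC0 : 0 ≤ 1+((q:ℝ)-1)*ρY := by
        have h1 : -ρY ≤ 1 / ((q:ℝ)-1) := neg_le.mp hYlo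
        rw [le_div_iff₀ hqm] at h1
        nlinarith [h1]
      have hpq : (0:ℝ) < (p:ℝ)*(q:ℝ) := by positivity
      rw [blockEquicorr_quadform]
      set S1 := ∑ i, (v (Sum.inl i))^2 with hS1
      set S2 := ∑ j, (v (Sum.inr j))^2 with hS2
      set s := ∑ i, v (Sum.inl i) with hs
      set t := ∑ j, v (Sum.inr j) with ht
      have hcs1 : s^2 ≤ (p:ℝ) * S1 := by
        have := sq_sum_le_card_mul_sum_sq (s := Finset.univ)
          (f := fun i => v (Sum.inl i))
        simpa [Finset.card_univ] using this
      have hcs2 : t^2 ≤ (q:ℝ) * S2 := by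
        have := sq_sum_le_card_mul_sum_sq (s := Finset.univ)
          (f := fun j => v (Sum.inr j))
        simpa [Finset.card_univ] using this
      have hB2 : ((p:ℝ)*(q:ℝ)*ρXY)^2
          ≤ ((q:ℝ)*(1+((p:ℝ)-1)*ρX))*((p:ℝ)*(1+((q:ℝ)-1)*ρY)) := by
        rw [div_mul_div_comm, le_div_iff₀ hpq] at hcross
        nlinarith [hcross, hpq]
      have key2 := quad_nonneg ((q:ℝ)*(1+((p:ℝ)-1)*ρX)) ((p:ℝ)*(q:ℝ)*ρXY)
        ((p:ℝ)*(1+((q:ℝ)-1)*ρY)) (mul_nonneg hq0.le hA0) (mul_nonneg hp0.le hC0)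
        hB2 s t
      have h1 : 0 ≤ (q:ℝ)*((1-ρX)*((p:ℝ)*S1 - s^2)) :=
        mul_nonneg hq0.le (mul_nonneg (by linarith) (by linarith))
      have h2 : 0 ≤ (p:ℝ)*((1-ρY)*((q:ℝ)*S2 - t^2)) :=
        mul_nonneg hp0.le (mul_nonneg (by linarith) (by linarith))
      have hfinal : 0 ≤ ((p:ℝ)*(q:ℝ)) * ((1-ρX) * S1 + (1-ρY) * S2
          + ρX * s^2 + ρY * t^2 + 2*ρXY*s*t) := by nlinarith [key2, h1, h2]
      nlinarith [hfinal, hpq]
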